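/- Let g ∈ L¹[0,1] be nonnegative with ‖g‖₁ ≤ 1. Then there exists an increasing sequence of positive integers (n_k) with n_{k+1} ≥ 2·n_k such that, defining the nondecreasing function R : [0,∞) → [1,∞) which is piecewise linear with R(n) = 1 for 0 ≤ n ≤ n₁ and R(n) = k for n_k < n ≤ n_{k+1} (n integer), one has R(u) → ∞ as u → ∞ and ∫₀¹ g(t)·R(g(t)) dt < ∞. -/

import Mathlib

open Filter Set MeasureTheory

open Topology
open scoped ENNReal NNReal

namespace Stmt8Aux

variable (n : ℕ → ℕ)

noncomputable def Kf (j : ℕ) : ℕ := sInf {k | j ≤ n k}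

noncomputable def rf (j : ℕ) : ℝ := max 1 ((Kf n j : ℝ))

noncomputable def Rf (x : ℝ) : ℝ :=
  (1 - (x - (⌊x⌋₊ : ℝ))) * rf n ⌊x⌋₊ + (x - (⌊x⌋₊ : ℝ)) * rf n (⌊x⌋₊ + 1)

variable {n}

lemma Kf_nonempty (hs : StrictMono n) (j : ℕ) : {k | j ≤ n k}.Nonempty :=
  ⟨j, hs.le_apply⟩

lemma Kf_spec (hs : StrictMono n) (j : ℕ) : j ≤ n (Kf n j) :=
  Nat.sInf_mem (Kf_nonempty hs j)

lemma Kf_le {j k : ℕ} (h : j ≤ n k) : Kf n j ≤ k := Nat.sInf_le h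

lemma lt_of_lt_Kf {j k : ℕ} (h : k < Kf n j) : n k < j := by
  have := Nat.notMem_of_lt_sInf h
  simpa using Nat.lt_of_not_le this

lemma Kf_mono (hs : StrictMono n) : Monotone (Kf n) := by
  intro j j' h
  exact Kf_le (h.trans (Kf_spec hs j'))

lemma Kf_eq_zero {j : ℕ} (h : j ≤ n 0) : Kf n j = 0 :=
  Nat.le_zero.mp (Kf_le h)

lemma Kf_eq_succ (hs : StrictMono n) {k j : ℕ} (h1 : n k < j) (h2 : j ≤ n (k+1)) :
    Kf n j = k + 1 := by
  refine le_antisymm (Kf_le h2) ?_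
  by_contra hlt
  push_neg at hlt
  have : j ≤ n k := (Kf_spec hs j).trans (hs.monotone (Nat.lt_succ_iff.mp hlt))
  omega

lemma rf_one_le (j : ℕ) : 1 ≤ rf n j := le_max_left _ _

lemma rf_mono (hs : StrictMono n) : Monotone (rf n) := by
  intro j j' h
  exact max_le_max le_rfl (by exact_mod_cast Kf_mono hs h)

lemma rf_le (j : ℕ) : rf n j ≤ 1 + (Kf n j : ℝ) := by
  unfold rf
  have : (0:ℝ) ≤ (Kf n j : ℝ) := Nat.cast_nonneg _
  rcases max_cases 1 ((Kf n j : ℝ)) with ⟨h, _⟩ | ⟨h, _⟩ <;> rw [h] <;> linarith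

lemma Rf_nat (j : ℕ) : Rf n (j : ℝ) = rf n j := by
  simp [Rf]

lemma rf_zero : rf n 0 = 1 := by
  simp [rf, Kf_eq_zero (Nat.zero_le _)]

lemma rf_one (h1 : 1 ≤ n 0) : rf n 1 = 1 := by
  simp [rf, Kf_eq_zero h1]

lemma Rf_of_neg (h1 : 1 ≤ n 0) {x : ℝ} (hx : x < 0) : Rf n x = 1 := by
  have h0 : ⌊x⌋₊ = 0 := Nat.floor_of_nonpos hx.le
  rw [Rf, h0, rf_zero, rf_one h1]
  push_cast
  ring

lemma Rf_mem (hs : StrictMono n) {x : ℝ} (hx : 0 ≤ x) :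
    rf n ⌊x⌋₊ ≤ Rf n x ∧ Rf n x ≤ rf n (⌊x⌋₊ + 1) := by
  have hsl : 0 ≤ x - (⌊x⌋₊ : ℝ) := by
    have := Nat.floor_le hx; linarith
  have hsu : x - (⌊x⌋₊ : ℝ) < 1 := by
    have := Nat.lt_floor_add_one x; linarith
  have hr : rf n ⌊x⌋₊ ≤ rf n (⌊x⌋₊ + 1) := rf_mono hs (Nat.le_succ _)
  rw [Rf]
  constructor
  · nlinarith
  · nlinarith

lemma Rf_one_le (hs : StrictMono n) (h1 : 1 ≤ n 0) (x : ℝ) : 1 ≤ Rf n x := by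
  rcases lt_or_ge x 0 with h | h
  · rw [Rf_of_neg h1 h]
  · exact (rf_one_le _).trans (Rf_mem hs h).1

lemma Rf_mono (hs : StrictMono n) (h1 : 1 ≤ n 0) : Monotone (Rf n) := by
  intro x y hxy
  rcases lt_or_ge y 0 with hy | hy
  · rw [Rf_of_neg h1 (lt_of_le_of_lt hxy hy), Rf_of_neg h1 hy]
  rcases lt_or_ge x 0 with hx | hx
  · rw [Rf_of_neg h1 hx]; exact Rf_one_le hs h1 y
  rcases eq_or_lt_of_le (Nat.floor_le_floor hxy) with hf | hf
  · -- same floor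
    have hr : rf n ⌊x⌋₊ ≤ rf n (⌊x⌋₊ + 1) := rf_mono hs (Nat.le_succ _)
    rw [Rf, Rf, ← hf]
    nlinarith [Nat.floor_le hx, Nat.lt_floor_add_one x]
  · have h1' : Rf n x ≤ rf n (⌊x⌋₊ + 1) := (Rf_mem hs hx).2
    have h2' : rf n (⌊x⌋₊ + 1) ≤ rf n ⌊y⌋₊ := rf_mono hs hf
    have h3' : rf n ⌊y⌋₊ ≤ Rf n y := (Rf_mem hs hy).1
    linarith

lemma Rf_tendsto (hs : StrictMono n) : Tendsto (Rf n) atTop atTop := by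
  rw [tendsto_atTop]
  intro b
  obtain ⟨k, hk⟩ := exists_nat_ge b
  filter_upwards [eventually_ge_atTop ((n k : ℝ) + 1)] with x hx
  have hx0 : (0:ℝ) ≤ x := le_trans (by positivity) hx
  have hfl : n k + 1 ≤ ⌊x⌋₊ := Nat.le_floor (by push_cast; linarith)
  have hK : k + 1 ≤ Kf n ⌊x⌋₊ := by
    by_contra hc
    push_neg at hc
    have : ⌊x⌋₊ ≤ n k := (Kf_spec hs ⌊x⌋₊).trans (hs.monotone (Nat.lt_succ_iff.mp hc))
    omega
  have hkk : (k:ℝ) ≤ (Kf n ⌊x⌋₊ : ℝ) := by exact_mod_cast le_trans (Nat.le_succ k) hK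
  exact (hk.trans (hkk.trans (le_max_right 1 _))).trans (Rf_mem hs hx0).1

lemma Rf_le_bound (hs : StrictMono n) {x : ℝ} (hx : 0 ≤ x) :
    Rf n x ≤ 1 + (Kf n (⌊x⌋₊ + 1) : ℝ) :=
  (Rf_mem hs hx).2.trans (rf_le _)

lemma Rf_interp (j : ℕ) {s : ℝ} (hs0 : 0 ≤ s) (hs1 : s ≤ 1) :
    Rf n ((j:ℝ) + s) = (1 - s) * Rf n j + s * Rf n ((j:ℝ) + 1) := by
  have hcast : ((j:ℝ) + 1) = ((j+1 : ℕ) : ℝ) := by push_cast; ring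
  rcases eq_or_lt_of_le hs1 with h1 | h1
  · subst h1
    rw [hcast, Rf_nat]
    ring
  · have hfl : ⌊(j:ℝ) + s⌋₊ = j := by
      rw [Nat.floor_eq_iff (by positivity)]
      constructor <;> [linarith; linarith]
    rw [Rf, hfl, Rf_nat, hcast, Rf_nat]
    ring_nf

lemma rf_eq_one {j : ℕ} (h : j ≤ n 0) : rf n j = 1 := by
  simp [rf, Kf_eq_zero h]

lemma rf_eq_succ (hs : StrictMono n) {k j : ℕ} (h1 : n k < j) (h2 : j ≤ n (k+1)) :
    rf n j = (k + 1 : ℝ) := by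
  rw [rf, Kf_eq_succ hs h1 h2]
  have h1' : (1:ℝ) ≤ ((k+1 : ℕ) : ℝ) := by exact_mod_cast Nat.succ_le_succ (Nat.zero_le k)
  rw [max_eq_right h1']
  push_cast; ring

lemma Rf_measurable (hs : StrictMono n) (h1 : 1 ≤ n 0) : Measurable (Rf n) :=
  (Rf_mono hs h1).measurable

end Stmt8Aux


theorem stmt_8 (g : ℝ → ℝ)
    (hg_int : IntegrableOn g (Set.Icc (0:ℝ) 1))
    (hg_nonneg : ∀ t, 0 ≤ g t)
    (hg_norm : (∫ t in Set.Icc (0:ℝ) 1, g t) ≤ 1) :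
    ∃ n : ℕ → ℕ, StrictMono n ∧ (∀ k, 0 < n k) ∧ (∀ k, 2 * n k ≤ n (k + 1)) ∧
      ∃ R : ℝ → ℝ,
        Monotone R ∧ (∀ x, 1 ≤ R x) ∧ Tendsto R atTop atTop ∧
        (∀ j : ℕ, j ≤ n 0 → R j = 1) ∧
        (∀ k : ℕ, ∀ j : ℕ, n k < j → j ≤ n (k + 1) → R j = (k + 1 : ℝ)) ∧
        (∀ j : ℕ, ∀ s ∈ Set.Icc (0:ℝ) 1, R (j + s) = (1 - s) * R j + s * R (j + 1)) ∧
        IntegrableOn (fun t => g t * R (g t)) (Set.Icc (0:ℝ) 1) := by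
  classical
  set μ : Measure ℝ := volume.restrict (Set.Icc (0:ℝ) 1) with hμ
  have hgint : Integrable g μ := hg_int
  -- measurable nonnegative a.e. representative
  obtain ⟨g0, hg0meas, hg0⟩ : ∃ g0, Measurable g0 ∧ g =ᵐ[μ] g0 := by
    obtain ⟨g0, h1, h2⟩ := hgint.aemeasurable
    exact ⟨g0, h1, h2⟩
  set G : ℝ → ℝ := fun t => max (g0 t) 0 with hGdef
  have hG : Measurable G := hg0meas.max measurable_const
  have hGg : g =ᵐ[μ] G := by
    filter_upwards [hg0] with t ht
    simp [hGdef, ← ht, max_eq_left (hg_nonneg t)]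
  have hGnn : ∀ t, 0 ≤ G t := fun t => le_max_right _ _
  have hGint : Integrable G μ := hgint.congr hGg
  -- the truncations
  set h : ℕ → ℝ → ℝ := fun m t => if (m:ℝ) ≤ G t then G t else 0 with hhdef
  have hmeas : ∀ m, Measurable (h m) := fun m =>
    Measurable.ite (measurableSet_le measurable_const hG) hG measurable_const
  have hbound : ∀ m t, ‖h m t‖ ≤ ‖G t‖ := by
    intro m t
    rw [Real.norm_eq_abs, Real.norm_eq_abs, abs_of_nonneg (hGnn t)]
    by_cases hc : (m:ℝ) ≤ G t <;> simp [hhdef, hc, abs_of_nonneg (hGnn t), hGnn t]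
  have hInt : ∀ m, Integrable (h m) μ := fun m =>
    hGint.mono (hmeas m).aestronglyMeasurable (Filter.Eventually.of_forall (hbound m))
  have hnn : ∀ m t, 0 ≤ h m t := by
    intro m t
    by_cases hc : (m:ℝ) ≤ G t <;> simp [hhdef, hc, hGnn t]
  have htend : Tendsto (fun m => ∫ t, h m t ∂μ) atTop (𝓝 0) := by
    have := MeasureTheory.tendsto_integral_of_dominated_convergence
      (F := h) (f := fun _ => (0:ℝ)) (μ := μ) (bound := G)
      (fun m => (hmeas m).aestronglyMeasurable) hGint
      (fun m => Filter.Eventually.of_forall fun t => by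
        simpa [Real.norm_eq_abs, abs_of_nonneg (hGnn t)] using hbound m t)
      (Filter.Eventually.of_forall fun t => by
        refine tendsto_const_nhds.congr' ?_
        filter_upwards [eventually_ge_atTop (⌊G t⌋₊ + 1)] with m hm
        have : G t < (m:ℝ) := by
          have h1 := Nat.lt_floor_add_one (G t)
          have h2 : ((⌊G t⌋₊ + 1 : ℕ) : ℝ) ≤ (m:ℝ) := by exact_mod_cast hm
          push_cast at h2
          linarith
        simp [hhdef, not_le.mpr this])
    simpa using this
  -- choose thresholds
  have hM : ∀ k : ℕ, ∃ M : ℕ, ∀ m, M ≤ m → ∫ t, h m t ∂μ ≤ (1/2)^k := by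
    intro k
    have hpos : (0:ℝ) < (1/2)^k := by positivity
    have := htend.eventually (eventually_le_nhds hpos)
    exact eventually_atTop.1 this
  choose M hMspec using hM
  -- construct n
  set nn : ℕ → ℕ := fun k => Nat.rec (max 1 (M 0)) (fun k ih => max (2 * ih + 1) (M (k+1))) k
    with hnn_def
  have hn1 : 1 ≤ nn 0 := le_max_left _ _
  have hnM : ∀ k, M k ≤ nn k := by
    intro k
    cases k with
    | zero => exact le_max_right _ _
    | succ k => exact le_max_right _ _
  have hstep : ∀ k, 2 * nn k + 1 ≤ nn (k+1) := fun k => le_max_left _ _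
  have hsmono : StrictMono nn := strictMono_nat_of_lt_succ fun k => by
    have := hstep k; omega
  have hpos : ∀ k, 0 < nn k := fun k =>
    lt_of_lt_of_le Nat.zero_lt_one (hn1.trans (hsmono.monotone (Nat.zero_le k)))
  have h2le : ∀ k, 2 * nn k ≤ nn (k+1) := fun k => by have := hstep k; omega
  have hint_k : ∀ k, ∫ t, h (nn k) t ∂μ ≤ (1/2)^k := fun k => hMspec k _ (hnM k)
  refine ⟨nn, hsmono, hpos, h2le, Stmt8Aux.Rf nn, Stmt8Aux.Rf_mono hsmono hn1,
    Stmt8Aux.Rf_one_le hsmono hn1, Stmt8Aux.Rf_tendsto hsmono, ?_, ?_, ?_, ?_⟩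
  · intro j hj
    rw [Stmt8Aux.Rf_nat, Stmt8Aux.rf_eq_one hj]
  · intro k j h1 h2
    rw [Stmt8Aux.Rf_nat, Stmt8Aux.rf_eq_succ hsmono h1 h2]
  · intro j s hs
    exact Stmt8Aux.Rf_interp (n := nn) j hs.1 hs.2
  · -- integrability
    have heq : (fun t => G t * Stmt8Aux.Rf nn (G t)) =ᵐ[μ] (fun t => g t * Stmt8Aux.Rf nn (g t)) := by
      filter_upwards [hGg] with t ht
      rw [ht]
    refine Integrable.congr ?_ heq
    have hRmeas : Measurable (Stmt8Aux.Rf nn) := Stmt8Aux.Rf_measurable hsmono hn1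
    refine ⟨(hG.mul (hRmeas.comp hG)).aestronglyMeasurable, ?_⟩
    have hfnn : 0 ≤ᵐ[μ] fun t => G t * Stmt8Aux.Rf nn (G t) :=
      Filter.Eventually.of_forall fun t =>
        mul_nonneg (hGnn t) (le_trans zero_le_one (Stmt8Aux.Rf_one_le hsmono hn1 _))
    rw [hasFiniteIntegral_iff_ofReal hfnn]
    -- pointwise bound
    have key : ∀ t, ENNReal.ofReal (G t * Stmt8Aux.Rf nn (G t)) ≤
        ENNReal.ofReal (G t) + ∑' k, ENNReal.ofReal (h (nn k) t) := by
      intro t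
      set x := G t with hx_def
      have hx : 0 ≤ x := hGnn t
      set Kx := Stmt8Aux.Kf nn (⌊x⌋₊ + 1) with hKx_def
      have hb : x * Stmt8Aux.Rf nn x ≤ x * (1 + (Kx:ℝ)) :=
        mul_le_mul_of_nonneg_left (Stmt8Aux.Rf_le_bound hsmono hx) hx
      calc ENNReal.ofReal (x * Stmt8Aux.Rf nn x)
          ≤ ENNReal.ofReal (x + (Kx:ℝ) * x) := ENNReal.ofReal_le_ofReal (by nlinarith)
        _ = ENNReal.ofReal x + ENNReal.ofReal ((Kx:ℝ) * x) :=
            ENNReal.ofReal_add hx (by positivity)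
        _ ≤ ENNReal.ofReal x + ∑' k, ENNReal.ofReal (h (nn k) t) := by
            gcongr
            rw [ENNReal.ofReal_mul (Nat.cast_nonneg _), ENNReal.ofReal_natCast]
            have hterm : ∀ i ∈ Finset.range Kx, ENNReal.ofReal (h (nn i) t)
                = ENNReal.ofReal x := by
              intro i hi
              have hlt : nn i < ⌊x⌋₊ + 1 :=
                Stmt8Aux.lt_of_lt_Kf (hKx_def ▸ Finset.mem_range.1 hi)
              have hle : (nn i : ℝ) ≤ x := by
                have hle' : (nn i : ℝ) ≤ (⌊x⌋₊ : ℝ) := by exact_mod_cast Nat.lt_succ_iff.mp hlt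
                exact hle'.trans (Nat.floor_le hx)
              simp [hhdef, show (nn i : ℝ) ≤ G t from hle, hx_def]
            have hsum : (Kx : ℝ≥0∞) * ENNReal.ofReal x
                = ∑ i ∈ Finset.range Kx, ENNReal.ofReal (h (nn i) t) := by
              rw [Finset.sum_congr rfl hterm, Finset.sum_const, Finset.card_range, nsmul_eq_mul]
            rw [hsum]
            exact ENNReal.sum_le_tsum _
    calc ∫⁻ t, ENNReal.ofReal (G t * Stmt8Aux.Rf nn (G t)) ∂μ
        ≤ ∫⁻ t, (ENNReal.ofReal (G t) + ∑' k, ENNReal.ofReal (h (nn k) t)) ∂μ :=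
          lintegral_mono key
      _ = ∫⁻ t, ENNReal.ofReal (G t) ∂μ + ∫⁻ t, ∑' k, ENNReal.ofReal (h (nn k) t) ∂μ :=
          lintegral_add_left' (hG.ennreal_ofReal.aemeasurable) _
      _ = ∫⁻ t, ENNReal.ofReal (G t) ∂μ + ∑' k, ∫⁻ t, ENNReal.ofReal (h (nn k) t) ∂μ := by
          rw [lintegral_tsum fun k => (hmeas (nn k)).ennreal_ofReal.aemeasurable]
      _ < ⊤ := by
          refine ENNReal.add_lt_top.2 ⟨?_, ?_⟩
          · calc ∫⁻ t, ENNReal.ofReal (G t) ∂μ ≤ ∫⁻ t, (‖G t‖₊ : ℝ≥0∞) ∂μ :=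
                lintegral_mono fun t => Real.ofReal_le_enorm (G t)
              _ < ⊤ := hGint.2
          · have hterm : ∀ k, ∫⁻ t, ENNReal.ofReal (h (nn k) t) ∂μ ≤
                ENNReal.ofReal ((1/2:ℝ)^k) := by
              intro k
              rw [← ofReal_integral_eq_lintegral_ofReal (hInt (nn k))
                (Filter.Eventually.of_forall (hnn (nn k)))]
              exact ENNReal.ofReal_le_ofReal (hint_k k)
            refine lt_of_le_of_lt (ENNReal.tsum_le_tsum hterm) ?_
            have : ∀ k : ℕ, ENNReal.ofReal ((1/2:ℝ)^k) = (ENNReal.ofReal (1/2))^k :=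
              fun k => ENNReal.ofReal_pow (by norm_num) k
            simp_rw [this, ENNReal.tsum_geometric]
            refine ENNReal.inv_lt_top.2 (tsub_pos_of_lt ?_)
            rw [ENNReal.ofReal_lt_one]
            norm_num
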